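/- Let p be a prime, d ≥ 1, and R = (ZMod p)[X]/(X^{p^d} − X). Let ψ : R → R be the (ZMod p)-algebra automorphism induced by X ↦ X + 1. Then the fixed subalgebra C = {a ∈ R : ψ a = a} equals Algebra.adjoin (ZMod p) {g₁} where g₁ is the image of X^p − X in R, and finrank (ZMod p) C = p^{d−1}. -/

import Mathlib

open Polynomial


lemma Xpow_sub_X_monic {K : Type*} [Field K] {n : ℕ} (hn : 2 ≤ n) :
    ((X : K[X]) ^ n - X).Monic := by
  rw [sub_eq_add_neg]
  refine (monic_X_pow n).add_of_left ?_
  rw [degree_neg, degree_X, degree_X_pow]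
  exact_mod_cast Nat.lt_of_lt_of_le one_lt_two hn

lemma Xpow_sub_X_degree {K : Type*} [Field K] {n : ℕ} (hn : 2 ≤ n) :
    ((X : K[X]) ^ n - X).degree = (n : WithBot ℕ) := by
  rw [sub_eq_add_neg, degree_add_eq_left_of_degree_lt, degree_X_pow]
  rw [degree_neg, degree_X, degree_X_pow]
  exact_mod_cast Nat.lt_of_lt_of_le one_lt_two hn

lemma Xpow_sub_X_natDegree {K : Type*} [Field K] {n : ℕ} (hn : 2 ≤ n) :
    ((X : K[X]) ^ n - X).natDegree = n :=
  natDegree_eq_of_degree_eq_some (Xpow_sub_X_degree hn)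

lemma comp_X_add_one_pow_sub {p : ℕ} [Fact p.Prime] :
    (((X : Polynomial (ZMod p)) ^ p - X).comp (X + 1)) = X ^ p - X := by
  have hc : (X + 1 : Polynomial (ZMod p)) ^ p = X ^ p + 1 := by
    rw [add_pow_char]; simp
  simp [sub_comp, pow_comp, X_comp, hc]

lemma degree_comp_X_add_one {K : Type*} [Field K] (r : K[X]) :
    (r.comp (X + 1)).degree = r.degree := by
  rcases eq_or_ne r 0 with rfl | hr
  · simp
  · have h1 : (X + 1 : K[X]).natDegree = 1 := by
      simpa using natDegree_X_add_C (1 : K)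
    have hcn : (r.comp (X + 1)).natDegree = r.natDegree := by
      rw [natDegree_comp, h1, mul_one]
    have hc0 : r.comp (X + 1) ≠ 0 := by
      intro h
      apply hr
      have : (r.comp (X + 1)).comp (X - 1) = r := by
        rw [comp_assoc]
        simp [add_comp, sub_comp]
      rw [h, zero_comp] at this
      exact this.symm
    rw [degree_eq_natDegree hc0, degree_eq_natDegree hr, hcn]

lemma shift_invariant_mem {p : ℕ} [Fact p.Prime] :
    ∀ n (f : Polynomial (ZMod p)), f.natDegree < n → f.comp (X + 1) = f →
      f ∈ Algebra.adjoin (ZMod p) {(X : Polynomial (ZMod p)) ^ p - X} := by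
  have hp2 : 2 ≤ p := (Fact.out : p.Prime).two_le
  intro n
  induction n with
  | zero => intro f h; omega
  | succ n ih =>
    intro f hdeg hfix
    set φ : Polynomial (ZMod p) := X ^ p - X with hφdef
    have hφm : φ.Monic := Xpow_sub_X_monic hp2
    have hφd : φ.degree = (p : WithBot ℕ) := Xpow_sub_X_degree hp2
    have hφnd : φ.natDegree = p := Xpow_sub_X_natDegree hp2
    set g := f /ₘ φ with hg
    set r := f %ₘ φ with hr
    have hfd : f = φ * g + r := by
      rw [hg, hr, add_comm]; exact (modByMonic_add_div f φ).symm
    have hrdeg : r.degree < φ.degree := degree_modByMonic_lt f hφm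
    clear_value g r
    have hexp : φ * (g.comp (X + 1)) + r.comp (X + 1) = φ * g + r := by
      conv_rhs => rw [← hfd, ← hfix, hfd]
      rw [add_comp, mul_comp, comp_X_add_one_pow_sub]
    have key : φ * (g.comp (X + 1) - g) = r - r.comp (X + 1) := by
      linear_combination hexp
    have hrc : r - r.comp (X + 1) = 0 := by
      refine Polynomial.eq_zero_of_dvd_of_degree_lt ⟨_, key.symm⟩ ?_
      calc (r - r.comp (X + 1)).degree ≤ max r.degree (r.comp (X+1)).degree := degree_sub_le _ _
        _ < φ.degree := by
            rw [degree_comp_X_add_one, max_self]; exact hrdeg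
    have hgfix : g.comp (X + 1) = g := by
      have h0 : φ * (g.comp (X + 1) - g) = 0 := by rw [key, hrc]
      rcases mul_eq_zero.mp h0 with h | h
      · exact absurd h hφm.ne_zero
      · linear_combination h
    have hrfix : r.comp (X + 1) = r := by linear_combination -hrc
    have hrconst : r = C (r.eval 0) := by
      have heval : ∀ m : ℕ, r.eval ((m : ZMod p)) = r.eval 0 := by
        intro m
        induction m with
        | zero => simp
        | succ m ihm =>
          have h3 := congrArg (fun q => q.eval ((m : ZMod p))) hrfix
          simp only [eval_comp, eval_add, eval_X, eval_one] at h3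
          have h2 : ((m + 1 : ℕ) : ZMod p) = (m : ZMod p) + 1 := by push_cast; ring
          rw [h2, h3, ihm]
      have hz : r - C (r.eval 0) = 0 := by
        apply Polynomial.eq_zero_of_natDegree_lt_card_of_eval_eq_zero _ Function.injective_id
        · intro a
          obtain ⟨m, rfl⟩ := ZMod.natCast_zmod_surjective (n := p) a
          simp [heval m]
        · have h1 : (r - C (r.eval 0)).natDegree ≤ r.natDegree := by
            refine (natDegree_sub_le _ _).trans ?_
            simp
          have h2 : r.natDegree < p := by
            rcases eq_or_ne r 0 with hr0 | hr0
            · rw [hr0]; simpa using (Fact.out : p.Prime).pos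
            · have h4 := (degree_eq_natDegree hr0) ▸ hrdeg
              rw [hφd] at h4
              exact_mod_cast h4
          simpa [ZMod.card] using lt_of_le_of_lt h1 h2
      linear_combination hz
    rcases eq_or_ne g 0 with rfl | hg0
    · rw [hfd, hrconst]
      simp only [mul_zero, zero_add]
      rw [← Polynomial.algebraMap_eq]
      exact Subalgebra.algebraMap_mem _ _
    · have hdg : g.natDegree < n := by
        have hdf : f.natDegree = p + g.natDegree := by
          rw [hfd]
          rw [natDegree_add_eq_left_of_degree_lt, natDegree_mul hφm.ne_zero hg0, hφnd]
          calc r.degree < φ.degree := hrdeg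
            _ ≤ (φ * g).degree := by
                rw [degree_mul]
                exact le_add_of_nonneg_right (zero_le_degree_iff.mpr hg0)
        omega
      have hgm := ih g hdg hgfix
      rw [hfd, hrconst]
      exact add_mem (mul_mem (Algebra.subset_adjoin rfl) hgm)
        (by rw [← Polynomial.algebraMap_eq]; exact Subalgebra.algebraMap_mem _ _)


-- finrank part, standalone
set_option maxHeartbeats 1000000 in
set_option synthInstance.maxHeartbeats 400000 in
lemma finrank_adjoin_aux (p : ℕ) [Fact p.Prime] (d : ℕ) (hd : 1 ≤ d) :
    Module.finrank (ZMod p)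
      (Algebra.adjoin (ZMod p)
        {Ideal.Quotient.mk (Ideal.span {(X : Polynomial (ZMod p)) ^ p ^ d - X})
          (X ^ p - X)}) = p ^ (d - 1) := by
  classical
  have hp2 : 2 ≤ p := (Fact.out : p.Prime).two_le
  set F : (ZMod p)[X] := X ^ p ^ d - X with hFdef
  set I : Ideal (ZMod p)[X] := Ideal.span {F} with hIdef
  have hq2 : 2 ≤ p ^ d := le_trans hp2 (Nat.le_self_pow (by omega) p)
  have hFm : F.Monic := Xpow_sub_X_monic hq2
  have hFdeg : F.degree = ((p ^ d : ℕ) : WithBot ℕ) := Xpow_sub_X_degree hq2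
  set φ : (ZMod p)[X] := X ^ p - X with hφdef
  have hφm : φ.Monic := Xpow_sub_X_monic hp2
  have hφnd : φ.natDegree = p := Xpow_sub_X_natDegree hp2
  set x := Ideal.Quotient.mk I φ with hxdef
  haveI hfin : Module.Finite (ZMod p) ((ZMod p)[X] ⧸ I) :=
    Module.Finite.of_basis (AdjoinRoot.powerBasis hFm.ne_zero).basis
  have hxint : IsIntegral (ZMod p) x := IsIntegral.of_finite (ZMod p) x
  obtain ⟨e, rfl⟩ : ∃ e, d = e + 1 := ⟨d - 1, by omega⟩
  -- the annihilating polynomial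
  set h : (ZMod p)[X] := ∑ i ∈ Finset.range (e + 1), X ^ p ^ i with hhdef
  have hhsplit : h = X ^ p ^ e + ∑ i ∈ Finset.range e, X ^ p ^ i := by
    rw [hhdef, Finset.sum_range_succ, add_comm]
  have htl : (∑ i ∈ Finset.range e, (X : (ZMod p)[X]) ^ p ^ i).degree
      < ((p ^ e : ℕ) : WithBot ℕ) := by
    refine lt_of_le_of_lt (degree_sum_le _ _) ?_
    rw [Finset.sup_lt_iff (by exact_mod_cast WithBot.bot_lt_coe (p ^ e : ℕ))]
    intro i hi
    rw [degree_X_pow]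
    exact_mod_cast Nat.pow_lt_pow_right hp2 (Finset.mem_range.mp hi)
  have hmono : h.Monic := by
    rw [hhsplit]
    exact (monic_X_pow _).add_of_left (by rw [degree_X_pow]; exact htl)
  have hhdeg : h.natDegree = p ^ e := by
    apply natDegree_eq_of_degree_eq_some
    rw [hhsplit, degree_add_eq_left_of_degree_lt (by rw [degree_X_pow]; exact htl), degree_X_pow]
  -- h annihilates x
  have hxpow : ∀ i : ℕ, x ^ p ^ i =
      Ideal.Quotient.mk I (X ^ p ^ (i + 1)) - Ideal.Quotient.mk I (X ^ p ^ i) := by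
    intro i
    have hfr : φ ^ p ^ i = X ^ p ^ (i + 1) - X ^ p ^ i := by
      rw [hφdef, sub_pow_char_pow, ← pow_mul, pow_succ']
    rw [hxdef, ← map_pow, hfr, map_sub]
  have haeh : Polynomial.aeval x h = 0 := by
    rw [hhdef]
    rw [map_sum]
    simp only [map_pow, aeval_X]
    rw [Finset.sum_congr rfl (fun i _ => hxpow i), Finset.sum_range_sub
      (f := fun i => Ideal.Quotient.mk I (X ^ p ^ i))]
    rw [pow_zero, pow_one, ← map_sub, ← hFdef]
    exact Ideal.Quotient.eq_zero_iff_mem.mpr (Ideal.subset_span rfl)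
  have hup : (minpoly (ZMod p) x).natDegree ≤ p ^ e := by
    have := minpoly.min (ZMod p) x hmono haeh
    calc (minpoly (ZMod p) x).natDegree ≤ h.natDegree := natDegree_le_natDegree this
      _ = p ^ e := hhdeg
  have hlow : p ^ e ≤ (minpoly (ZMod p) x).natDegree := by
    by_contra hlt
    push_neg at hlt
    have hmm : (minpoly (ZMod p) x).Monic := minpoly.monic hxint
    have hcomp : ((minpoly (ZMod p) x).comp φ).Monic :=
      hmm.comp hφm (by rw [hφnd]; omega)
    have hdvd : F ∣ (minpoly (ZMod p) x).comp φ := by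
      have h0 : Ideal.Quotient.mk I ((minpoly (ZMod p) x).comp φ) = 0 := by
        have h1 : Polynomial.aeval x (minpoly (ZMod p) x)
            = (Ideal.Quotient.mkₐ (ZMod p) I) (Polynomial.aeval φ (minpoly (ZMod p) x)) := by
          rw [hxdef, ← Ideal.Quotient.mkₐ_eq_mk (ZMod p) I]
          exact Polynomial.aeval_algHom_apply _ _ _
        rw [comp_eq_aeval, ← Ideal.Quotient.mkₐ_eq_mk (ZMod p) I, ← h1, minpoly.aeval]
      rw [Ideal.Quotient.eq_zero_iff_mem] at h0
      exact Ideal.mem_span_singleton.1 h0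
    have hdeg2 : ((minpoly (ZMod p) x).comp φ).degree < F.degree := by
      rw [hFdeg, degree_eq_natDegree hcomp.ne_zero, natDegree_comp, hφnd]
      have : (minpoly (ZMod p) x).natDegree * p < p ^ (e + 1) := by
        calc (minpoly (ZMod p) x).natDegree * p < p ^ e * p :=
              (Nat.mul_lt_mul_right (show 0 < p by omega)).mpr hlt
          _ = p ^ (e + 1) := (pow_succ p e).symm
      exact_mod_cast this
    exact hcomp.ne_zero (Polynomial.eq_zero_of_dvd_of_degree_lt hdvd hdeg2)
  have hmd : (minpoly (ZMod p) x).natDegree = p ^ e := le_antisymm hup hlow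
  have hfr := (Algebra.adjoin.powerBasis hxint).finrank
  rw [Algebra.adjoin.powerBasis_dim] at hfr
  rw [hfr, hmd]
  simp

set_option maxHeartbeats 1000000 in
set_option synthInstance.maxHeartbeats 400000 in
theorem stmt11 (p : ℕ) [Fact p.Prime] (d : ℕ) (hd : 1 ≤ d)
    (ψ : (Polynomial (ZMod p) ⧸ Ideal.span {(X : Polynomial (ZMod p)) ^ p ^ d - X}) ≃ₐ[ZMod p]
         (Polynomial (ZMod p) ⧸ Ideal.span {(X : Polynomial (ZMod p)) ^ p ^ d - X}))
    (hψ : ∀ f : Polynomial (ZMod p),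
      ψ (Ideal.Quotient.mk (Ideal.span {(X : Polynomial (ZMod p)) ^ p ^ d - X}) f) =
        Ideal.Quotient.mk (Ideal.span {(X : Polynomial (ZMod p)) ^ p ^ d - X})
          (f.comp (X + 1))) :
    {a | ψ a = a} =
      (Algebra.adjoin (ZMod p)
        {Ideal.Quotient.mk (Ideal.span {(X : Polynomial (ZMod p)) ^ p ^ d - X})
          (X ^ p - X)} :
        Subalgebra (ZMod p)
          (Polynomial (ZMod p) ⧸ Ideal.span {(X : Polynomial (ZMod p)) ^ p ^ d - X})) ∧
    Module.finrank (ZMod p)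
      (Algebra.adjoin (ZMod p)
        {Ideal.Quotient.mk (Ideal.span {(X : Polynomial (ZMod p)) ^ p ^ d - X})
          (X ^ p - X)}) = p ^ (d - 1) := by
  have hp2 : 2 ≤ p := (Fact.out : p.Prime).two_le
  have hq2 : 2 ≤ p ^ d := le_trans hp2 (Nat.le_self_pow (by omega) p)
  have hFm : ((X : (ZMod p)[X]) ^ p ^ d - X).Monic := Xpow_sub_X_monic hq2
  refine ⟨?_, finrank_adjoin_aux p d hd⟩
  have hgen : ψ (Ideal.Quotient.mk (Ideal.span {(X : (ZMod p)[X]) ^ p ^ d - X}) (X ^ p - X)) =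
      Ideal.Quotient.mk (Ideal.span {(X : (ZMod p)[X]) ^ p ^ d - X}) (X ^ p - X) := by
    rw [hψ, comp_X_add_one_pow_sub]
  ext a
  simp only [Set.mem_setOf_eq, SetLike.mem_coe]
  constructor
  · intro ha
    obtain ⟨f, rfl⟩ := Ideal.Quotient.mk_surjective a
    have hmkfr : Ideal.Quotient.mk (Ideal.span {(X : (ZMod p)[X]) ^ p ^ d - X}) f =
        Ideal.Quotient.mk (Ideal.span {(X : (ZMod p)[X]) ^ p ^ d - X})
          (f %ₘ (X ^ p ^ d - X)) := by
      rw [Ideal.Quotient.eq]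
      refine Ideal.mem_span_singleton.mpr ⟨f /ₘ (X ^ p ^ d - X), ?_⟩
      have h5 := modByMonic_add_div f ((X : (ZMod p)[X]) ^ p ^ d - X)
      linear_combination -h5
    have hψr : Ideal.Quotient.mk (Ideal.span {(X : (ZMod p)[X]) ^ p ^ d - X})
          ((f %ₘ (X ^ p ^ d - X)).comp (X + 1)) =
        Ideal.Quotient.mk (Ideal.span {(X : (ZMod p)[X]) ^ p ^ d - X})
          (f %ₘ (X ^ p ^ d - X)) := by
      rw [← hψ, ← hmkfr, ha, hmkfr]
    have hdvd := Ideal.mem_span_singleton.mp (Ideal.Quotient.eq.mp hψr)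
    have hdeg : ((f %ₘ (X ^ p ^ d - X)).comp (X + 1) - f %ₘ (X ^ p ^ d - X)).degree <
        ((X : (ZMod p)[X]) ^ p ^ d - X).degree := by
      refine lt_of_le_of_lt (degree_sub_le _ _) ?_
      rw [degree_comp_X_add_one, max_self]
      exact degree_modByMonic_lt f hFm
    have hz := Polynomial.eq_zero_of_dvd_of_degree_lt hdvd hdeg
    have hfix2 : (f %ₘ (X ^ p ^ d - X)).comp (X + 1) = f %ₘ (X ^ p ^ d - X) :=
      sub_eq_zero.mp hz
    have hmem := shift_invariant_mem ((f %ₘ (X ^ p ^ d - X)).natDegree + 1) _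
      (Nat.lt_succ_self _) hfix2
    rw [hmkfr]
    have himg : (Algebra.adjoin (ZMod p) {(X : (ZMod p)[X]) ^ p - X}).map
        (Ideal.Quotient.mkₐ (ZMod p) (Ideal.span {(X : (ZMod p)[X]) ^ p ^ d - X})) =
        Algebra.adjoin (ZMod p)
          {Ideal.Quotient.mk (Ideal.span {(X : (ZMod p)[X]) ^ p ^ d - X}) (X ^ p - X)} := by
      rw [AlgHom.map_adjoin, Set.image_singleton, Ideal.Quotient.mkₐ_eq_mk]
    rw [← himg]
    exact Subalgebra.mem_map.mpr ⟨_, hmem, by rw [Ideal.Quotient.mkₐ_eq_mk]⟩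
  · intro ha
    have hle : Algebra.adjoin (ZMod p)
          {Ideal.Quotient.mk (Ideal.span {(X : (ZMod p)[X]) ^ p ^ d - X}) (X ^ p - X)} ≤
        AlgHom.equalizer ψ.toAlgHom (AlgHom.id (ZMod p) _) := by
      apply Algebra.adjoin_le
      intro y hy
      rw [Set.mem_singleton_iff] at hy
      subst hy
      simpa [AlgHom.mem_equalizer] using hgen
    have h6 := hle ha
    simpa [AlgHom.mem_equalizer] using h6
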